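/- arXiv:1209.2310 — 3 statements merged into one kernel-verified Lean document; each statement's English description precedes it below -/
import Mathlib

section
/- For λ > 0 and t, x, y > 0, the heat kernel h_λ(t,x,y) = (2t)^{-λ} e^{-(x+y)/t} Ĩ_{λ-1}(2√(xy)/t) on ℝ₊ satisfies the semigroup identity ∫_0^∞ h_λ(s,x,z) h_λ(t,y,z) dμ_λ(z) = h_λ(s+t,x,y) for all s, t > 0 and x, y > 0, where dμ_λ(z) = (2^λ/Γ(λ)) z^{λ-1} dz. -/
open MeasureTheory Set
open scoped ENNReal

/-- The one-dimensional heat kernel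
`h_λ(t,x,y) = (2t)^{-λ} e^{-(x+y)/t} Ĩ_{λ-1}(2√(xy)/t)` via the power series of `Ĩ`. -/
noncomputable def heatKer (l t x y : ℝ) : ℝ :=
  (2 * t) ^ (-l) * Real.exp (-(x + y) / t) * Real.Gamma l *
    ∑' m : ℕ, (x * y / t ^ 2) ^ m / ((m.factorial : ℝ) * Real.Gamma ((m : ℝ) + l))

namespace HKAux

/-- Ascending factorial (Pochhammer) `x(x+1)⋯(x+k-1)`. -/
noncomputable def asc (x : ℝ) : ℕ → ℝ
  | 0 => 1
  | k + 1 => asc x k * (x + k)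

@[simp] lemma asc_zero (x : ℝ) : asc x 0 = 1 := rfl

lemma asc_succ (x : ℝ) (k : ℕ) : asc x (k + 1) = asc x k * (x + k) := rfl

lemma asc_pos {x : ℝ} (hx : 0 < x) (k : ℕ) : 0 < asc x k := by
  induction k with
  | zero => norm_num [asc]
  | succ k ih => rw [asc_succ]; positivity

lemma asc_front (x : ℝ) (k : ℕ) : asc x (k + 1) = x * asc (x + 1) k := by
  induction k with
  | zero => simp [asc_succ]
  | succ k ih =>
    rw [asc_succ, ih, asc_succ]
    push_cast
    ring

lemma asc_add (x : ℝ) (m k : ℕ) : asc x (m + k) = asc x m * asc (x + m) k := by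
  induction k with
  | zero => simp
  | succ k ih =>
    rw [← Nat.add_assoc, asc_succ, ih, asc_succ]
    push_cast
    ring

lemma Gamma_asc {x : ℝ} (hx : 0 < x) (k : ℕ) :
    Real.Gamma ((k : ℝ) + x) = Real.Gamma x * asc x k := by
  induction k with
  | zero => simp
  | succ k ih =>
    have h1 : ((k + 1 : ℕ) : ℝ) + x = ((k : ℝ) + x) + 1 := by push_cast; ring
    have h2 : (0 : ℝ) < (k : ℝ) + x := by positivity
    rw [h1, Real.Gamma_add_one h2.ne', ih, asc_succ]
    ring


/-- Vandermonde-type identity for ascending factorials. -/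
lemma vander (n : ℕ) : ∀ (m : ℕ) (x : ℝ),
    ∑ k ∈ Finset.range (m + 1),
        (n.choose k : ℝ) * (asc (x + k) (m - k) / (m - k).factorial)
      = asc (x + n) m / m.factorial := by
  induction n with
  | zero =>
    intro m x
    rw [Finset.sum_eq_single 0]
    · simp
    · intro k hk hk0
      rw [Nat.choose_eq_zero_of_lt (Nat.pos_of_ne_zero hk0)]
      simp
    · simp
  | succ n ih =>
    intro m x
    match m with
    | 0 => simp
    | m + 1 =>
      set f : ℕ → ℝ := fun k =>
        ((n + 1).choose k : ℝ) * (asc (x + k) (m + 1 - k) / (m + 1 - k).factorial) with hf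
      set g : ℕ → ℝ := fun k =>
        (n.choose k : ℝ) * (asc (x + k) (m + 1 - k) / (m + 1 - k).factorial) with hg
      set h : ℕ → ℝ := fun k =>
        (n.choose k : ℝ) * (asc ((x + 1) + k) (m - k) / (m - k).factorial) with hh
      have hA : ∀ k, f (k + 1) = g (k + 1) + h k := by
        intro k
        simp only [hf, hg, hh]
        rw [show x + ((k + 1 : ℕ) : ℝ) = (x + 1) + (k : ℝ) by push_cast; ring,
          Nat.succ_sub_succ, Nat.choose_succ_succ]
        push_cast
        ring
      have h0 : f 0 = g 0 := by simp [hf, hg]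
      have e1 : ∑ k ∈ Finset.range (m + 2), f k
          = ∑ k ∈ Finset.range (m + 2), g k + ∑ k ∈ Finset.range (m + 1), h k := by
        rw [Finset.sum_range_succ' f (m + 1), Finset.sum_range_succ' g (m + 1)]
        simp only [hA]
        rw [Finset.sum_add_distrib, h0]
        ring
      show ∑ k ∈ Finset.range (m + 2), f k = _
      rw [e1, ih (m + 1) x, ih m (x + 1)]
      have e2 : asc (x + ((n : ℝ) + 1)) (m + 1)
          = asc ((x + n) + 1) m * ((x + n) + 1 + m) := by
        rw [show x + ((n : ℝ) + 1) = (x + n) + 1 by ring, asc_succ]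
      have e3 : asc (x + (n : ℝ)) (m + 1) = (x + n) * asc ((x + n) + 1) m := asc_front _ m
      have e4 : asc ((x + 1) + (n : ℝ)) m = asc ((x + n) + 1) m := by
        rw [show (x + 1) + (n : ℝ) = (x + n) + 1 by ring]
      push_cast
      rw [e2, e3, e4]
      have hm1 : ((m + 1).factorial : ℝ) = (m + 1) * m.factorial := by
        rw [Nat.factorial_succ]; push_cast; ring
      rw [hm1]
      have hmf : (m.factorial : ℝ) ≠ 0 := Nat.cast_ne_zero.mpr m.factorial_ne_zero
      field_simp
      ring


/-- The Chu–Vandermonde-type coefficient identity. -/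
lemma key {l : ℝ} (hl : 0 < l) (m n : ℕ) :
    Real.Gamma (((m + n : ℕ) : ℝ) + l) /
        (m.factorial * n.factorial * Real.Gamma ((m : ℝ) + l) * Real.Gamma ((n : ℝ) + l))
      = ∑ k ∈ Finset.range (min m n + 1),
          1 / ((m - k).factorial * (n - k).factorial * k.factorial *
            Real.Gamma ((k : ℝ) + l)) := by
  have hG : Real.Gamma l ≠ 0 := (Real.Gamma_pos_of_pos hl).ne'
  have hsum : ∑ k ∈ Finset.range (min m n + 1),
      (1 : ℝ) / ((m - k).factorial * (n - k).factorial * k.factorial *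
        Real.Gamma ((k : ℝ) + l))
      = ∑ k ∈ Finset.range (m + 1),
          (n.choose k : ℝ) * (asc (l + k) (m - k) / (m - k).factorial) /
            (n.factorial * Real.Gamma l * asc l m) := by
    rw [← Finset.sum_subset (Finset.range_subset_range.mpr (by omega : min m n + 1 ≤ m + 1))]
    · refine Finset.sum_congr rfl fun k hk => ?_
      have hkm : k ≤ m := by have := Finset.mem_range.mp hk; omega
      have hkn : k ≤ n := by have := Finset.mem_range.mp hk; omega
      rw [Gamma_asc hl k, Nat.cast_choose ℝ hkn,
        show m = k + (m - k) by omega, asc_add l k (m - k)]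
      have h1 : (0:ℝ) < asc l k := asc_pos hl k
      have h2 : (0:ℝ) < asc (l + k) (m - k) := asc_pos (by positivity) _
      have e : k + (m - k) - k = m - k := by omega
      rw [e]
      have f1 : ((m - k).factorial : ℝ) ≠ 0 := Nat.cast_ne_zero.mpr (Nat.factorial_ne_zero _)
      have f2 : ((n - k).factorial : ℝ) ≠ 0 := Nat.cast_ne_zero.mpr (Nat.factorial_ne_zero _)
      have f3 : (k.factorial : ℝ) ≠ 0 := Nat.cast_ne_zero.mpr (Nat.factorial_ne_zero _)
      have f4 : (n.factorial : ℝ) ≠ 0 := Nat.cast_ne_zero.mpr (Nat.factorial_ne_zero _)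
      field_simp
    · intro k hk hk'
      have hkm : k ≤ m := by have := Finset.mem_range.mp hk; omega
      have hkn : n < k := by
        have h1 := Finset.mem_range.mp hk
        have h2 : ¬ k < min m n + 1 := fun h => hk' (Finset.mem_range.mpr h)
        omega
      rw [Nat.choose_eq_zero_of_lt hkn]
      simp
  rw [hsum, ← Finset.sum_div, vander n m l]
  rw [Gamma_asc hl m, Gamma_asc hl n,
    show (((m + n : ℕ)) : ℝ) = ((n + m : ℕ) : ℝ) by push_cast; ring,
    Gamma_asc hl (n + m), asc_add l n m]
  have h1 : (0:ℝ) < asc l m := asc_pos hl m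
  have h2 : (0:ℝ) < asc l n := asc_pos hl n
  have h3 : (0:ℝ) < asc (l + n) m := asc_pos (by positivity) m
  have f1 : (m.factorial : ℝ) ≠ 0 := Nat.cast_ne_zero.mpr (Nat.factorial_ne_zero _)
  have f4 : (n.factorial : ℝ) ≠ 0 := Nat.cast_ne_zero.mpr (Nat.factorial_ne_zero _)
  field_simp


lemma le_asc {l : ℝ} (hl : 0 < l) (m : ℕ) :
    min l 1 ^ m * m.factorial ≤ asc l m := by
  induction m with
  | zero => simp
  | succ m ih =>
    rw [asc_succ]
    have h1 : min l 1 * (m + 1 : ℝ) ≤ l + m := by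
      rcases le_total l 1 with h | h
      · rw [min_eq_left h]; nlinarith
      · rw [min_eq_right h]; nlinarith
    calc min l 1 ^ (m + 1) * (m + 1).factorial
        = (min l 1 ^ m * m.factorial) * (min l 1 * (m + 1 : ℝ)) := by
          rw [Nat.factorial_succ]; push_cast; ring
      _ ≤ asc l m * (l + m) := by
          apply mul_le_mul ih h1 (by positivity)
          exact (asc_pos hl m).le

lemma summable_S {l : ℝ} (hl : 0 < l) {u : ℝ} (hu : 0 ≤ u) :
    Summable (fun m : ℕ => u ^ m / (m.factorial * Real.Gamma ((m : ℝ) + l))) := by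
  have hG : 0 < Real.Gamma l := Real.Gamma_pos_of_pos hl
  have hmin : (0:ℝ) < min l 1 := lt_min hl one_pos
  refine Summable.of_nonneg_of_le ?_ ?_
    (((Real.summable_pow_div_factorial (u / min l 1)).mul_left ((Real.Gamma l)⁻¹)))
  · intro m
    have : 0 < Real.Gamma ((m : ℝ) + l) := Real.Gamma_pos_of_pos (by positivity)
    positivity
  · intro m
    have hasc := asc_pos hl m
    have hfac : (1:ℝ) ≤ m.factorial := by exact_mod_cast Nat.one_le_iff_ne_zero.mpr m.factorial_ne_zero
    have hb : (0:ℝ) < Real.Gamma l * (min l 1 ^ m * m.factorial) := by positivity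
    have hle : Real.Gamma l * (min l 1 ^ m * m.factorial) ≤ m.factorial * Real.Gamma ((m:ℝ) + l) := by
      rw [Gamma_asc hl m]
      calc Real.Gamma l * (min l 1 ^ m * m.factorial)
          ≤ Real.Gamma l * asc l m := by
            apply mul_le_mul_of_nonneg_left (le_asc hl m) hG.le
        _ = 1 * (Real.Gamma l * asc l m) := by ring
        _ ≤ m.factorial * (Real.Gamma l * asc l m) := by
            apply mul_le_mul_of_nonneg_right hfac (by positivity)
    calc u ^ m / (m.factorial * Real.Gamma ((m : ℝ) + l))
        ≤ u ^ m / (Real.Gamma l * (min l 1 ^ m * m.factorial)) :=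
          div_le_div_of_nonneg_left (by positivity) hb hle
      _ = (Real.Gamma l)⁻¹ * ((u / min l 1) ^ m / m.factorial) := by
          rw [div_pow]
          field_simp

lemma exp_tsum (a : ℝ) : Real.exp a = ∑' p : ℕ, a ^ p / p.factorial := by
  rw [Real.exp_eq_exp_ℝ, NormedSpace.exp_eq_tsum_div]

lemma Gamma_cast_pos {l : ℝ} (hl : 0 < l) (k : ℕ) : 0 < Real.Gamma ((k : ℝ) + l) :=
  Real.Gamma_pos_of_pos (by positivity)

/-- The central series rearrangement identity, carried out in `ℝ≥0∞`. -/
lemma series_key {l a b : ℝ} (hl : 0 < l) (ha : 0 < a) (hb : 0 < b) :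
    ∑' mn : ℕ × ℕ, ENNReal.ofReal
        (Real.Gamma (((mn.1 + mn.2 : ℕ) : ℝ) + l) /
          (mn.1.factorial * mn.2.factorial * Real.Gamma ((mn.1 : ℝ) + l) *
            Real.Gamma ((mn.2 : ℝ) + l)) * a ^ mn.1 * b ^ mn.2)
      = ENNReal.ofReal (Real.exp a * Real.exp b *
          ∑' k : ℕ, (a * b) ^ k / (k.factorial * Real.Gamma ((k : ℝ) + l))) := by
  classical
  -- the elementary pieces
  set u : ℕ × ℕ → ℕ → ℝ≥0∞ := fun mn k =>
    if k ≤ min mn.1 mn.2 then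
      ENNReal.ofReal (a ^ mn.1 * b ^ mn.2 /
        ((mn.1 - k).factorial * (mn.2 - k).factorial * k.factorial *
          Real.Gamma ((k : ℝ) + l))) else 0 with hu
  have facpos : ∀ j : ℕ, (0:ℝ) < j.factorial := fun j => by
    exact_mod_cast j.factorial_pos
  -- Step 1: each term equals a finite sum
  have step1 : ∀ mn : ℕ × ℕ,
      ENNReal.ofReal
        (Real.Gamma (((mn.1 + mn.2 : ℕ) : ℝ) + l) /
          (mn.1.factorial * mn.2.factorial * Real.Gamma ((mn.1 : ℝ) + l) *
            Real.Gamma ((mn.2 : ℝ) + l)) * a ^ mn.1 * b ^ mn.2)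
        = ∑' k : ℕ, u mn k := by
    rintro ⟨m, n⟩
    have e1 : Real.Gamma (((m + n : ℕ) : ℝ) + l) /
          (m.factorial * n.factorial * Real.Gamma ((m : ℝ) + l) *
            Real.Gamma ((n : ℝ) + l)) * a ^ m * b ^ n
        = ∑ k ∈ Finset.range (min m n + 1),
            a ^ m * b ^ n / ((m - k).factorial * (n - k).factorial * k.factorial *
              Real.Gamma ((k : ℝ) + l)) := by
      rw [key hl m n, Finset.sum_mul, Finset.sum_mul]
      refine Finset.sum_congr rfl fun k _ => ?_
      ring
    rw [e1, ENNReal.ofReal_sum_of_nonneg (fun k _ => by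
      have := Gamma_cast_pos hl k
      have := facpos (m - k); have := facpos (n - k); have := facpos k
      positivity)]
    rw [tsum_eq_sum (s := Finset.range (min m n + 1))
      (fun k hk => by
        have hkn : ¬ k ≤ min m n := by
          simp only [Finset.mem_range] at hk; omega
        simp only [hu]
        rw [if_neg hkn])]
    refine Finset.sum_congr rfl fun k hk => ?_
    have hkn : k ≤ min m n := by simp only [Finset.mem_range] at hk; omega
    simp only [hu]
    rw [if_pos hkn]
  -- Step 2: reindex
  set ψ : (ℕ × ℕ) × ℕ → (ℕ × ℕ) × ℕ := fun w => ((w.1.1 + w.2, w.1.2 + w.2), w.2) with hψ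
  have hinj : Function.Injective ψ := by
    rintro ⟨⟨p, q⟩, k⟩ ⟨⟨p', q'⟩, k'⟩ h
    simp only [hψ, Prod.mk.injEq] at h
    obtain ⟨⟨h1, h2⟩, h3⟩ := h
    subst h3
    simp_all [Prod.ext_iff]
  have hsupp : Function.support (fun w : (ℕ × ℕ) × ℕ => u w.1 w.2) ⊆ Set.range ψ := by
    rintro ⟨⟨m, n⟩, k⟩ hw
    have hw' : u (m, n) k ≠ 0 := hw
    have hk : k ≤ min m n := by
      by_contra hk
      apply hw'
      simp only [hu]
      rw [if_neg hk]
    refine ⟨((m - k, n - k), k), ?_⟩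
    have h1 : m - k + k = m := by omega
    have h2 : n - k + k = n := by omega
    simp [hψ, h1, h2]
  have step2 : ∑' w : (ℕ × ℕ) × ℕ, u w.1 w.2
      = ∑' w : (ℕ × ℕ) × ℕ, u (ψ w).1 (ψ w).2 :=
    (Function.Injective.tsum_eq hinj hsupp).symm
  -- Step 3: evaluate composed term as a product
  have step3 : ∀ w : (ℕ × ℕ) × ℕ, u (ψ w).1 (ψ w).2
      = ENNReal.ofReal (a ^ w.1.1 / w.1.1.factorial) *
        ENNReal.ofReal (b ^ w.1.2 / w.1.2.factorial) *
        ENNReal.ofReal ((a * b) ^ w.2 / (w.2.factorial * Real.Gamma ((w.2 : ℝ) + l))) := by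
    rintro ⟨⟨p, q⟩, k⟩
    have hk : k ≤ min (p + k) (q + k) := by omega
    simp only [hψ, hu, if_pos hk, Nat.add_sub_cancel]
    rw [← ENNReal.ofReal_mul (by positivity), ← ENNReal.ofReal_mul (by positivity)]
    congr 1
    have h1 := Gamma_cast_pos hl k
    have := facpos p; have := facpos q; have := facpos k
    rw [pow_add, pow_add, mul_pow]
    field_simp
  -- assemble
  calc ∑' mn : ℕ × ℕ, ENNReal.ofReal
        (Real.Gamma (((mn.1 + mn.2 : ℕ) : ℝ) + l) /
          (mn.1.factorial * mn.2.factorial * Real.Gamma ((mn.1 : ℝ) + l) *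
            Real.Gamma ((mn.2 : ℝ) + l)) * a ^ mn.1 * b ^ mn.2)
      = ∑' mn : ℕ × ℕ, ∑' k : ℕ, u mn k := tsum_congr step1
    _ = ∑' w : (ℕ × ℕ) × ℕ, u w.1 w.2 :=
        (ENNReal.tsum_prod' (f := fun w : (ℕ × ℕ) × ℕ => u w.1 w.2)).symm
    _ = ∑' w : (ℕ × ℕ) × ℕ, (ENNReal.ofReal (a ^ w.1.1 / w.1.1.factorial) *
          ENNReal.ofReal (b ^ w.1.2 / w.1.2.factorial) *
          ENNReal.ofReal ((a * b) ^ w.2 / (w.2.factorial * Real.Gamma ((w.2 : ℝ) + l)))) := by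
        rw [step2]; exact tsum_congr step3
    _ = (∑' p : ℕ, ENNReal.ofReal (a ^ p / p.factorial)) *
          ((∑' q : ℕ, ENNReal.ofReal (b ^ q / q.factorial)) *
          ∑' k : ℕ, ENNReal.ofReal ((a * b) ^ k / (k.factorial * Real.Gamma ((k : ℝ) + l)))) := by
        rw [ENNReal.tsum_prod' (f := fun w : (ℕ × ℕ) × ℕ =>
          ENNReal.ofReal (a ^ w.1.1 / w.1.1.factorial) *
          ENNReal.ofReal (b ^ w.1.2 / w.1.2.factorial) *
          ENNReal.ofReal ((a * b) ^ w.2 / (w.2.factorial * Real.Gamma ((w.2 : ℝ) + l))))]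
        dsimp only
        simp_rw [mul_assoc, ENNReal.tsum_mul_left]
        rw [ENNReal.tsum_prod' (f := fun pq : ℕ × ℕ =>
          ENNReal.ofReal (a ^ pq.1 / pq.1.factorial) *
          (ENNReal.ofReal (b ^ pq.2 / pq.2.factorial) *
          ∑' k : ℕ, ENNReal.ofReal ((a * b) ^ k / (k.factorial * Real.Gamma ((k : ℝ) + l)))))]
        dsimp only
        simp_rw [ENNReal.tsum_mul_left, ENNReal.tsum_mul_right]
    _ = ENNReal.ofReal (Real.exp a) * (ENNReal.ofReal (Real.exp b) *
          ENNReal.ofReal (∑' k : ℕ, (a * b) ^ k / (k.factorial * Real.Gamma ((k : ℝ) + l)))) := by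
        rw [exp_tsum a, exp_tsum b,
          ENNReal.ofReal_tsum_of_nonneg (fun p => by positivity)
            (Real.summable_pow_div_factorial a),
          ENNReal.ofReal_tsum_of_nonneg (fun q => by positivity)
            (Real.summable_pow_div_factorial b),
          ENNReal.ofReal_tsum_of_nonneg (fun k => by
            have := Gamma_cast_pos hl k; have := facpos k; positivity)
            (summable_S hl (by positivity))]
    _ = ENNReal.ofReal (Real.exp a * Real.exp b *
          ∑' k : ℕ, (a * b) ^ k / (k.factorial * Real.Gamma ((k : ℝ) + l))) := by
        rw [← ENNReal.ofReal_mul (by positivity), ← ENNReal.ofReal_mul (by positivity),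
          mul_assoc]

end HKAux

open HKAux

set_option maxHeartbeats 1000000 in
/-- Semigroup property:
`∫_0^∞ h_λ(s,x,z) h_λ(t,y,z) dμ_λ(z) = h_λ(s+t,x,y)` where
`dμ_λ(z) = (2^λ/Γ(λ)) z^{λ-1} dz`. -/
theorem stmt2 (l : ℝ) (hl : 0 < l) (s t x y : ℝ) (hs : 0 < s) (ht : 0 < t)
    (hx : 0 < x) (hy : 0 < y) :
    ∫ z : ℝ in Ioi 0,
        heatKer l s x z * heatKer l t y z * ((2 : ℝ) ^ l / Real.Gamma l * z ^ (l - 1))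
      = heatKer l (s + t) x y := by
  have hG : 0 < Real.Gamma l := Real.Gamma_pos_of_pos hl
  have hGc : ∀ k : ℕ, 0 < Real.Gamma ((k : ℝ) + l) := Gamma_cast_pos hl
  have hfc : ∀ k : ℕ, (0:ℝ) < k.factorial := fun k => by exact_mod_cast k.factorial_pos
  set c : ℝ := (s + t) / (s * t) with hc
  have hc0 : 0 < c := by positivity
  have hic : (0 : ℝ) < 1 / c := by positivity
  set a : ℝ := x / s ^ 2 * (1 / c) with hadef
  set b : ℝ := y / t ^ 2 * (1 / c) with hbdef
  have ha : 0 < a := by positivity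
  have hb : 0 < b := by positivity
  set C₁ : ℝ := (2 * s) ^ (-l) * (2 * t) ^ (-l) * (2 : ℝ) ^ l * Real.Gamma l *
    Real.exp (-(x / s) - y / t) with hC₁
  have hC₁0 : 0 < C₁ := by
    have h1 : (0:ℝ) < (2 * s) ^ (-l) := Real.rpow_pos_of_pos (by positivity) _
    have h2 : (0:ℝ) < (2 * t) ^ (-l) := Real.rpow_pos_of_pos (by positivity) _
    have h3 : (0:ℝ) < (2:ℝ) ^ l := Real.rpow_pos_of_pos (by positivity) _
    rw [hC₁]; positivity
  set g : ℕ × ℕ → ℝ → ℝ := fun mn z =>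
    C₁ * ((x / s ^ 2) ^ mn.1 / (mn.1.factorial * Real.Gamma ((mn.1 : ℝ) + l))) *
      ((y / t ^ 2) ^ mn.2 / (mn.2.factorial * Real.Gamma ((mn.2 : ℝ) + l))) *
      (z ^ (l - 1) * Real.exp (-(c * z)) * z ^ (mn.1 + mn.2)) with hg
  -- pointwise expansion of the integrand as a double series
  have hptwise : ∀ z ∈ Ioi (0:ℝ),
      heatKer l s x z * heatKer l t y z * ((2 : ℝ) ^ l / Real.Gamma l * z ^ (l - 1))
        = ∑' mn : ℕ × ℕ, g mn z := by
    intro z hz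
    have hz0 : (0:ℝ) < z := hz
    have S1 : Summable (fun m : ℕ =>
        (x * z / s ^ 2) ^ m / (m.factorial * Real.Gamma ((m : ℝ) + l))) :=
      summable_S hl (by positivity)
    have S2 : Summable (fun n : ℕ =>
        (y * z / t ^ 2) ^ n / (n.factorial * Real.Gamma ((n : ℝ) + l))) :=
      summable_S hl (by positivity)
    have S12 : Summable (fun mn : ℕ × ℕ =>
        (x * z / s ^ 2) ^ mn.1 / (mn.1.factorial * Real.Gamma ((mn.1 : ℝ) + l)) *
        ((y * z / t ^ 2) ^ mn.2 / (mn.2.factorial * Real.Gamma ((mn.2 : ℝ) + l)))) :=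
      S1.mul_of_nonneg S2 (fun m => by have := hGc m; have := hfc m; positivity)
        (fun n => by have := hGc n; have := hfc n; positivity)
    have hprod := Summable.tsum_mul_tsum S1 S2 S12
    have he1 : Real.exp (-(x + z) / s) = Real.exp (-(x / s)) * Real.exp (-(z / s)) := by
      rw [← Real.exp_add]; congr 1; field_simp; ring
    have he2 : Real.exp (-(y + z) / t) = Real.exp (-(y / t)) * Real.exp (-(z / t)) := by
      rw [← Real.exp_add]; congr 1; field_simp; ring
    have he3 : Real.exp (-(x / s) - y / t) = Real.exp (-(x / s)) * Real.exp (-(y / t)) := by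
      rw [← Real.exp_add]; ring_nf
    have he4 : Real.exp (-(c * z)) = Real.exp (-(z / s)) * Real.exp (-(z / t)) := by
      rw [← Real.exp_add]; congr 1; rw [hc]; field_simp; ring
    calc heatKer l s x z * heatKer l t y z * ((2 : ℝ) ^ l / Real.Gamma l * z ^ (l - 1))
        = ((∑' m : ℕ, (x * z / s ^ 2) ^ m / (m.factorial * Real.Gamma ((m : ℝ) + l))) *
           ∑' n : ℕ, (y * z / t ^ 2) ^ n / (n.factorial * Real.Gamma ((n : ℝ) + l))) *
          ((2 * s) ^ (-l) * Real.exp (-(x + z) / s) * Real.Gamma l *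
            ((2 * t) ^ (-l) * Real.exp (-(y + z) / t) * Real.Gamma l) *
            ((2 : ℝ) ^ l / Real.Gamma l * z ^ (l - 1))) := by
          rw [heatKer, heatKer]; ring
      _ = ∑' mn : ℕ × ℕ,
            ((x * z / s ^ 2) ^ mn.1 / (mn.1.factorial * Real.Gamma ((mn.1 : ℝ) + l)) *
             ((y * z / t ^ 2) ^ mn.2 / (mn.2.factorial * Real.Gamma ((mn.2 : ℝ) + l))) *
            ((2 * s) ^ (-l) * Real.exp (-(x + z) / s) * Real.Gamma l *
              ((2 * t) ^ (-l) * Real.exp (-(y + z) / t) * Real.Gamma l) *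
              ((2 : ℝ) ^ l / Real.Gamma l * z ^ (l - 1)))) := by
          rw [hprod, tsum_mul_right]
      _ = ∑' mn : ℕ × ℕ, g mn z := by
          refine tsum_congr fun mn => ?_
          simp only [hg]
          rw [hC₁, he1, he2, he3, he4,
            show x * z / s ^ 2 = x / s ^ 2 * z by ring,
            show y * z / t ^ 2 = y / t ^ 2 * z by ring,
            mul_pow, mul_pow, pow_add]
          have h1 := hGc mn.1; have h2 := hGc mn.2
          have h3 := hfc mn.1; have h4 := hfc mn.2
          field_simp
  rw [setIntegral_congr_fun measurableSet_Ioi hptwise]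
  -- integrability and value of each piece
  have hbase : ∀ k : ℕ, IntegrableOn
      (fun z : ℝ => z ^ (l - 1) * Real.exp (-(c * z)) * z ^ k) (Ioi 0) := by
    intro k
    have h := integrableOn_rpow_mul_exp_neg_mul_rpow
      (s := l - 1 + k) (p := 1) (by have : (0:ℝ) ≤ k := Nat.cast_nonneg k; linarith)
      zero_lt_one hc0
    refine h.congr_fun (fun z hz => ?_) measurableSet_Ioi
    have hz0 : (0:ℝ) < z := hz
    beta_reduce
    rw [Real.rpow_one, Real.rpow_add hz0, Real.rpow_natCast, neg_mul]
    ring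
  have hval : ∀ k : ℕ, ∫ z in Ioi 0, z ^ (l - 1) * Real.exp (-(c * z)) * z ^ k
      = (1 / c) ^ ((k : ℝ) + l) * Real.Gamma ((k : ℝ) + l) := by
    intro k
    rw [← Real.integral_rpow_mul_exp_neg_mul_Ioi (by positivity : (0:ℝ) < (k : ℝ) + l) hc0]
    refine setIntegral_congr_fun measurableSet_Ioi (fun z hz => ?_)
    have hz0 : (0:ℝ) < z := hz
    rw [show (k : ℝ) + l - 1 = l - 1 + (k : ℝ) by ring, Real.rpow_add hz0,
      Real.rpow_natCast]
    ring
  have hgint : ∀ mn : ℕ × ℕ, IntegrableOn (g mn) (Ioi 0) := by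
    intro mn
    simp only [hg]
    exact (hbase (mn.1 + mn.2)).const_mul _
  have hgnn : ∀ mn : ℕ × ℕ, ∀ z ∈ Ioi (0:ℝ), 0 ≤ g mn z := by
    intro mn z hz
    have hz0 : (0:ℝ) < z := hz
    have h1 := hGc mn.1; have h2 := hGc mn.2
    have h3 := hfc mn.1; have h4 := hfc mn.2
    have h5 : (0:ℝ) < z ^ (l - 1) := Real.rpow_pos_of_pos hz0 _
    simp only [hg]
    positivity
  set K : ℕ × ℕ → ℝ := fun mn =>
    C₁ * ((x / s ^ 2) ^ mn.1 / (mn.1.factorial * Real.Gamma ((mn.1 : ℝ) + l))) *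
      ((y / t ^ 2) ^ mn.2 / (mn.2.factorial * Real.Gamma ((mn.2 : ℝ) + l))) *
      ((1 / c) ^ (((mn.1 + mn.2 : ℕ) : ℝ) + l) *
        Real.Gamma (((mn.1 + mn.2 : ℕ) : ℝ) + l)) with hK
  have hgval : ∀ mn : ℕ × ℕ, ∫ z in Ioi 0, g mn z = K mn := by
    intro mn
    simp only [hg, hK]
    rw [MeasureTheory.integral_const_mul, hval (mn.1 + mn.2)]
  have hK0 : ∀ mn : ℕ × ℕ, 0 ≤ K mn := by
    intro mn
    have h1 := hGc mn.1; have h2 := hGc mn.2; have h5 := hGc (mn.1 + mn.2)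
    have h3 := hfc mn.1; have h4 := hfc mn.2
    have h6 : (0:ℝ) < (1 / c) ^ (((mn.1 + mn.2 : ℕ) : ℝ) + l) :=
      Real.rpow_pos_of_pos hic _
    simp only [hK]
    positivity
  set C₂ : ℝ := C₁ * (1 / c) ^ l with hC₂
  have hC₂0 : 0 < C₂ := by
    have := Real.rpow_pos_of_pos hic l
    rw [hC₂]; positivity
  have hKeq : ∀ mn : ℕ × ℕ, K mn
      = C₂ * (Real.Gamma (((mn.1 + mn.2 : ℕ) : ℝ) + l) /
          (mn.1.factorial * mn.2.factorial * Real.Gamma ((mn.1 : ℝ) + l) *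
            Real.Gamma ((mn.2 : ℝ) + l)) * a ^ mn.1 * b ^ mn.2) := by
    intro mn
    simp only [hK, hC₂, hadef, hbdef]
    rw [Real.rpow_add hic, Real.rpow_natCast, pow_add, mul_pow, mul_pow]
    ring
  -- the series of values
  set Sab : ℝ := ∑' k : ℕ, (a * b) ^ k / (k.factorial * Real.Gamma ((k : ℝ) + l)) with hSab
  have hSab0 : 0 ≤ Sab := by
    rw [hSab]
    refine tsum_nonneg fun k => ?_
    have := hGc k; have := hfc k
    positivity
  have hsum_ofReal : ∑' mn : ℕ × ℕ, ENNReal.ofReal (K mn)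
      = ENNReal.ofReal (C₂ * (Real.exp a * Real.exp b * Sab)) := by
    calc ∑' mn : ℕ × ℕ, ENNReal.ofReal (K mn)
        = ∑' mn : ℕ × ℕ, ENNReal.ofReal C₂ * ENNReal.ofReal
            (Real.Gamma (((mn.1 + mn.2 : ℕ) : ℝ) + l) /
              (mn.1.factorial * mn.2.factorial * Real.Gamma ((mn.1 : ℝ) + l) *
                Real.Gamma ((mn.2 : ℝ) + l)) * a ^ mn.1 * b ^ mn.2) := by
          refine tsum_congr fun mn => ?_
          rw [hKeq mn, ENNReal.ofReal_mul hC₂0.le]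
      _ = ENNReal.ofReal C₂ * ENNReal.ofReal (Real.exp a * Real.exp b * Sab) := by
          rw [ENNReal.tsum_mul_left, series_key hl ha hb, hSab]
      _ = ENNReal.ofReal (C₂ * (Real.exp a * Real.exp b * Sab)) :=
          (ENNReal.ofReal_mul hC₂0.le).symm
  -- measurability
  have hmeas : ∀ mn : ℕ × ℕ, AEStronglyMeasurable (g mn) (volume.restrict (Ioi 0)) := by
    intro mn
    refine ContinuousOn.aestronglyMeasurable ?_ measurableSet_Ioi
    simp only [hg]
    refine ContinuousOn.mul (continuousOn_const.mul ?_) ?_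
    · exact continuousOn_const
    · refine ContinuousOn.mul (ContinuousOn.mul ?_ ?_) ?_
      · intro z hz
        exact (Real.continuousAt_rpow_const z (l - 1)
          (Or.inl (ne_of_gt (mem_Ioi.mp hz)))).continuousWithinAt
      · exact ((Real.continuous_exp.comp (continuous_const.mul continuous_id).neg)).continuousOn
      · exact (continuous_pow _).continuousOn
  -- norm lintegrals
  have hnorm : ∀ mn : ℕ × ℕ,
      ∫⁻ z in Ioi 0, ‖g mn z‖₊ = ENNReal.ofReal (K mn) := by
    intro mn
    have h1 : ∫⁻ z in Ioi 0, (‖g mn z‖₊ : ℝ≥0∞)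
        = ∫⁻ z in Ioi 0, ENNReal.ofReal (g mn z) := by
      refine lintegral_congr_ae ?_
      filter_upwards [ae_restrict_mem measurableSet_Ioi] with z hz
      rw [← enorm_eq_nnnorm, Real.enorm_eq_ofReal (hgnn mn z hz)]
    rw [h1, ← ofReal_integral_eq_lintegral_ofReal (hgint mn)
      ((ae_restrict_iff' measurableSet_Ioi).2 (ae_of_all _ (hgnn mn))), hgval]
  have hfin : ∑' mn : ℕ × ℕ, ∫⁻ z in Ioi 0, ‖g mn z‖₊ ≠ ⊤ := by
    rw [tsum_congr hnorm, hsum_ofReal]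
    exact ENNReal.ofReal_ne_top
  rw [MeasureTheory.integral_tsum hmeas hfin, tsum_congr hgval]
  -- sum the real series
  have hKsum : ∑' mn : ℕ × ℕ, K mn = C₂ * (Real.exp a * Real.exp b * Sab) := by
    have h1 : ∀ mn : ℕ × ℕ, K mn = (ENNReal.ofReal (K mn)).toReal :=
      fun mn => (ENNReal.toReal_ofReal (hK0 mn)).symm
    rw [tsum_congr h1, ← ENNReal.tsum_toReal_eq (fun mn => ENNReal.ofReal_ne_top),
      hsum_ofReal, ENNReal.toReal_ofReal (by positivity)]
  rw [hKsum]
  -- final algebra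
  have hab : a * b = x * y / (s + t) ^ 2 := by
    rw [hadef, hbdef, hc]
    field_simp
  have hpow : (2 * s) ^ (-l) * (2 * t) ^ (-l) * (2 : ℝ) ^ l * (1 / c) ^ l
      = (2 * (s + t)) ^ (-l) := by
    rw [Real.rpow_neg (by positivity), Real.rpow_neg (by positivity),
      Real.rpow_neg (by positivity)]
    have p1 : (0:ℝ) < (2 * s) ^ l := Real.rpow_pos_of_pos (by positivity) _
    have p2 : (0:ℝ) < (2 * t) ^ l := Real.rpow_pos_of_pos (by positivity) _
    have p3 : (0:ℝ) < (2 * (s + t)) ^ l := Real.rpow_pos_of_pos (by positivity) _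
    have key2 : (2 : ℝ) ^ l * (1 / c) ^ l * (2 * (s + t)) ^ l
        = (2 * s) ^ l * (2 * t) ^ l := by
      rw [← Real.mul_rpow (by norm_num) hic.le,
        ← Real.mul_rpow (by positivity) (by positivity),
        ← Real.mul_rpow (by positivity) (by positivity)]
      congr 1
      rw [hc]
      field_simp
    field_simp
    linarith [key2]
  have hexp2 : Real.exp (-(x / s) - y / t) * (Real.exp a * Real.exp b)
      = Real.exp (-(x + y) / (s + t)) := by
    rw [← Real.exp_add, ← Real.exp_add]
    congr 1
    rw [hadef, hbdef, hc]
    field_simp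
    ring
  rw [heatKer, ← hab]
  calc C₂ * (Real.exp a * Real.exp b * Sab)
      = ((2 * s) ^ (-l) * (2 * t) ^ (-l) * (2 : ℝ) ^ l * (1 / c) ^ l) *
        (Real.exp (-(x / s) - y / t) * (Real.exp a * Real.exp b)) *
        Real.Gamma l * Sab := by
        rw [hC₂, hC₁]; ring
    _ = (2 * (s + t)) ^ (-l) * Real.exp (-(x + y) / (s + t)) * Real.Gamma l * Sab := by
        rw [hpow, hexp2]
end

section
/- For λ > 0 and fixed y > 0, the function u(t,x) = h_λ(t,x,y) = (2t)^{-λ} e^{-(x+y)/t} Ĩ_{λ-1}(2√(xy)/t) solves the heat equation x ∂²u/∂x² + λ ∂u/∂x = ∂u/∂t on (0,∞) × (0,∞). -/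
set_option maxHeartbeats 1600000

open MeasureTheory Set

noncomputable def Tser (c : ℕ → ℝ) (z : ℝ) : ℝ := ∑' m, c m * z ^ m

noncomputable def dcoef (c : ℕ → ℝ) : ℕ → ℝ := fun m => ((m : ℝ) + 1) * c (m + 1)

def scoef (c : ℕ → ℝ) : ℕ → ℝ
  | 0 => 0
  | m + 1 => c m

noncomputable def co (l : ℝ) : ℕ → ℝ :=
  fun m => 1 / ((m.factorial : ℝ) * Real.Gamma ((m : ℝ) + l))

def GoodC (c : ℕ → ℝ) : Prop := ∀ R : ℝ, 0 ≤ R → Summable fun m => |c m| * R ^ m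

lemma GoodC.summable {c : ℕ → ℝ} (hc : GoodC c) (z : ℝ) :
    Summable fun m => c m * z ^ m := by
  refine Summable.of_norm_bounded (hc |z| (abs_nonneg z)) fun m => ?_
  rw [norm_mul, norm_pow]
  simp [Real.norm_eq_abs]

lemma GoodC.dcoefG {c : ℕ → ℝ} (hc : GoodC c) : GoodC (dcoef c) := by
  intro R hR
  have h2 : Summable fun m => |c (m + 1)| * (2 * R + 2) ^ (m + 1) :=
    (summable_nat_add_iff 1).2 (hc (2 * R + 2) (by linarith))
  refine Summable.of_nonneg_of_le (fun m => by positivity) (fun m => ?_) h2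
  have h1 : ((m : ℝ) + 1) ≤ 2 ^ (m + 1) := by
    exact_mod_cast (Nat.lt_two_pow_self (n := m + 1)).le
  have h2' : R ^ m ≤ (R + 1) ^ (m + 1) := by
    calc R ^ m ≤ (R + 1) ^ m := pow_le_pow_left₀ hR (by linarith) m
    _ ≤ (R + 1) ^ (m + 1) := pow_le_pow_right₀ (by linarith) (Nat.le_succ m)
  have : |dcoef c m| = ((m : ℝ) + 1) * |c (m + 1)| := by
    simp only [dcoef]
    rw [abs_mul, abs_of_nonneg (by positivity : (0:ℝ) ≤ (m : ℝ) + 1)]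
  rw [this, show (2 * R + 2) = 2 * (R + 1) by ring, mul_pow]
  calc ((m : ℝ) + 1) * |c (m + 1)| * R ^ m
      = |c (m + 1)| * (((m : ℝ) + 1) * R ^ m) := by ring
    _ ≤ |c (m + 1)| * (2 ^ (m + 1) * (R + 1) ^ (m + 1)) := by
        apply mul_le_mul_of_nonneg_left _ (abs_nonneg _)
        exact mul_le_mul h1 h2' (by positivity) (by positivity)

lemma GoodC.scoefG {c : ℕ → ℝ} (hc : GoodC c) : GoodC (scoef c) := by
  intro R hR
  rw [← summable_nat_add_iff 1]
  have := (hc R hR).mul_right R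
  refine this.congr fun m => ?_
  simp [scoef, pow_succ, mul_assoc]

lemma Tser_scoef {c : ℕ → ℝ} (hc : GoodC c) (z : ℝ) :
    Tser (scoef c) z = z * Tser c z := by
  rw [Tser, Summable.tsum_eq_zero_add (hc.scoefG.summable z)]
  simp only [scoef, pow_zero, zero_mul, zero_add]
  rw [Tser, ← tsum_mul_left]
  exact tsum_congr fun b => by rw [pow_succ]; ring

lemma hasDerivAt_Tser {c : ℕ → ℝ} (hc : GoodC c) (z : ℝ) :
    HasDerivAt (Tser c) (Tser (dcoef c) z) z := by
  set R : ℝ := |z| + 1 with hRdef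
  have hz : z ∈ Metric.ball (0 : ℝ) R := by
    rw [Metric.mem_ball, dist_zero_right, Real.norm_eq_abs]
    linarith [abs_nonneg z]
  have hR1 : 1 ≤ R := by rw [hRdef]; linarith [abs_nonneg z]
  have hbound : ∀ n : ℕ, ∀ x : ℝ, x ∈ Metric.ball (0 : ℝ) R →
      ‖c n * ((n : ℝ) * x ^ (n - 1))‖ ≤ |c n| * (2 * R) ^ n := by
    intro n x hx
    rw [Metric.mem_ball, dist_zero_right, Real.norm_eq_abs] at hx
    rw [norm_mul, Real.norm_eq_abs, Real.norm_eq_abs, abs_mul, abs_pow,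
      Nat.abs_cast, mul_pow]
    apply mul_le_mul_of_nonneg_left _ (abs_nonneg _)
    have hn : (n : ℝ) ≤ 2 ^ n := by exact_mod_cast (Nat.lt_two_pow_self (n := n)).le
    have hxp : |x| ^ (n - 1) ≤ R ^ n := by
      calc |x| ^ (n - 1) ≤ R ^ (n - 1) := pow_le_pow_left₀ (abs_nonneg x) hx.le _
      _ ≤ R ^ n := pow_le_pow_right₀ hR1 (Nat.sub_le n 1)
    exact mul_le_mul hn hxp (by positivity) (by positivity)
  have hu : Summable fun n => |c n| * (2 * R) ^ n := hc (2 * R) (by positivity)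
  have key := hasDerivAt_tsum_of_isPreconnected hu Metric.isOpen_ball
    (convex_ball (0 : ℝ) R).isPreconnected
    (fun n x _ => (hasDerivAt_pow n x).const_mul (c n)) hbound
    hz (hc.summable z) hz
  have hsum : Summable fun n : ℕ => c n * ((n : ℝ) * z ^ (n - 1)) :=
    Summable.of_norm_bounded hu fun n => hbound n z hz
  have hval : (∑' n : ℕ, c n * ((n : ℝ) * z ^ (n - 1))) = Tser (dcoef c) z := by
    rw [Summable.tsum_eq_zero_add hsum, Tser]
    simp only [Nat.cast_zero, zero_mul, mul_zero, zero_add]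
    exact tsum_congr fun n => by simp only [dcoef]; push_cast; ring
  rw [← hval]
  exact key

lemma gamma_ml_pos {l : ℝ} (hl : 0 < l) (m : ℕ) : 0 < Real.Gamma ((m : ℝ) + l) :=
  Real.Gamma_pos_of_pos (by positivity)

lemma gamma_lb {l : ℝ} (hl : 0 < l) (m : ℕ) :
    min (Real.Gamma l) (l * Real.Gamma l) ≤ Real.Gamma ((m : ℝ) + l) := by
  induction m with
  | zero => simpa using min_le_left _ _
  | succ k ih =>
    have hk : ((k + 1 : ℕ) : ℝ) + l = ((k : ℝ) + l) + 1 := by push_cast; ring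
    have hkl : (0 : ℝ) < (k : ℝ) + l := by positivity
    rw [hk, Real.Gamma_add_one hkl.ne']
    rcases Nat.eq_zero_or_pos k with hk0 | hk0
    · subst hk0
      simpa using min_le_right (Real.Gamma l) (l * Real.Gamma l)
    · have h1 : (1 : ℝ) ≤ (k : ℝ) + l := by
        have : (1 : ℝ) ≤ (k : ℝ) := by exact_mod_cast hk0
        linarith
      nlinarith [gamma_ml_pos hl k]

lemma good_co {l : ℝ} (hl : 0 < l) : GoodC (co l) := by
  intro R hR
  set e : ℝ := min (Real.Gamma l) (l * Real.Gamma l) with he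
  have he0 : 0 < e := lt_min (Real.Gamma_pos_of_pos hl)
    (mul_pos hl (Real.Gamma_pos_of_pos hl))
  have hs : Summable fun m : ℕ => (1 / e) * (R ^ m / m.factorial) :=
    (Real.summable_pow_div_factorial R).mul_left _
  refine Summable.of_nonneg_of_le (fun m => by positivity) (fun m => ?_) hs
  have hg := gamma_ml_pos hl m
  have hgl := gamma_lb hl m
  have hco : |co l m| = 1 / ((m.factorial : ℝ) * Real.Gamma ((m : ℝ) + l)) := by
    rw [co, abs_of_nonneg (by positivity)]
  rw [hco]
  rw [div_mul_eq_mul_div, one_mul]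
  rw [← he] at hgl
  have hrhs : (1 : ℝ) / e * (R ^ m / (m.factorial : ℝ))
      = R ^ m / ((m.factorial : ℝ) * e) := by
    rw [one_div, inv_mul_eq_div, div_div]
  rw [hrhs, div_le_div_iff₀ (by positivity) (by positivity)]
  have hf : (0 : ℝ) < (m.factorial : ℝ) := by positivity
  nlinarith [pow_nonneg hR m, mul_le_mul_of_nonneg_right hgl hf.le]

lemma coef_id {l : ℝ} (hl : 0 < l) (m : ℕ) :
    scoef (dcoef (dcoef (co l))) m + l * dcoef (co l) m = co l m := by
  cases m with
  | zero =>
    simp only [scoef, dcoef, co]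
    push_cast
    rw [show (1 : ℝ) + l = l + 1 by ring, Real.Gamma_add_one hl.ne']
    have h1 : Real.Gamma l ≠ 0 := (Real.Gamma_pos_of_pos hl).ne'
    have h2 : Real.Gamma (0 + l) = Real.Gamma l := by rw [zero_add]
    rw [h2]
    field_simp
    simp
  | succ k =>
    simp only [scoef, dcoef, co]
    have hcast : ((k + 1 + 1 : ℕ) : ℝ) + l = (((k + 1 : ℕ) : ℝ) + l) + 1 := by
      push_cast; ring
    have hne : ((k + 1 : ℕ) : ℝ) + l ≠ 0 := by positivity
    rw [hcast, Real.Gamma_add_one hne]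
    have hg : Real.Gamma (((k + 1 : ℕ) : ℝ) + l) ≠ 0 :=
      (Real.Gamma_pos_of_pos (by positivity)).ne'
    have hfact : ((k + 1 + 1).factorial : ℝ) = ((k + 2 : ℕ) : ℝ) * ((k + 1).factorial : ℝ) := by
      rw [show k + 1 + 1 = k + 2 by ring, Nat.factorial_succ]
      push_cast; ring
    rw [hfact]
    have hfne : ((k + 1).factorial : ℝ) ≠ 0 := by positivity
    have hk2 : ((k + 2 : ℕ) : ℝ) ≠ 0 := by positivity
    field_simp
    push_cast
    ring

lemma ode {l : ℝ} (hl : 0 < l) (z : ℝ) :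
    z * Tser (dcoef (dcoef (co l))) z + l * Tser (dcoef (co l)) z = Tser (co l) z := by
  have hc : GoodC (co l) := good_co hl
  have h1 := hc.dcoefG
  have h2 := h1.dcoefG
  rw [← Tser_scoef h2 z, Tser, Tser, Tser, ← tsum_mul_left,
    ← Summable.tsum_add (h2.scoefG.summable z) ((h1.summable z).mul_left l)]
  exact tsum_congr fun m => by
    rw [← coef_id hl m]; ring

/-- For fixed `y > 0`, `u(t,x) = h_λ(t,x,y)` solves the heat equation
`x ∂²u/∂x² + λ ∂u/∂x = ∂u/∂t` on `(0,∞) × (0,∞)`. -/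
theorem stmt3 (l : ℝ) (hl : 0 < l) (y : ℝ) (hy : 0 < y) :
    ∀ t x : ℝ, 0 < t → 0 < x →
      x * deriv (deriv (fun x' => heatKer l t x' y)) x
        + l * deriv (fun x' => heatKer l t x' y) x
      = deriv (fun t' => heatKer l t' x y) t := by
  intro t x ht hx
  have hc0 : GoodC (co l) := good_co hl
  have hc1 := hc0.dcoefG
  have ht2 : (t : ℝ) ^ 2 ≠ 0 := by positivity
  have hts : ∀ w : ℝ, (∑' m : ℕ, w ^ m / ((m.factorial : ℝ) * Real.Gamma ((m : ℝ) + l)))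
      = Tser (co l) w := by
    intro w
    rw [Tser]
    exact tsum_congr fun m => by simp only [co]; ring
  -- the function in the x-variable
  have funeq : (fun x' => heatKer l t x' y)
      = fun x' => ((2 * t) ^ (-l) * Real.Gamma l) *
          (Real.exp (-(x' + y) / t) * Tser (co l) (x' * y / t ^ 2)) := by
    funext x'
    rw [heatKer, hts]
    ring
  -- derivative building blocks in x
  have hinner : ∀ x' : ℝ, HasDerivAt (fun x'' : ℝ => x'' * y / t ^ 2) (y / t ^ 2) x' := by
    intro x'
    have := ((hasDerivAt_id x').mul_const y).div_const (t ^ 2)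
    simpa using this
  have hexp : ∀ x' : ℝ, HasDerivAt (fun x'' : ℝ => Real.exp (-(x'' + y) / t))
      (Real.exp (-(x' + y) / t) * (-(1 / t))) x' := by
    intro x'
    have h : HasDerivAt (fun x'' : ℝ => -(x'' + y) / t) (-(1 / t)) x' := by
      have H := (((hasDerivAt_id x').add_const y).neg.div_const t)
      refine H.congr_deriv ?_
      ring
    exact h.exp
  have hS : ∀ (c : ℕ → ℝ), GoodC c → ∀ x' : ℝ,
      HasDerivAt (fun x'' : ℝ => Tser c (x'' * y / t ^ 2))
        (Tser (dcoef c) (x' * y / t ^ 2) * (y / t ^ 2)) x' := by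
    intro c hc x'
    exact (hasDerivAt_Tser hc _).comp x' (hinner x')
  -- first derivative in x
  have hD1 : ∀ x' : ℝ, HasDerivAt
      (fun x'' => ((2 * t) ^ (-l) * Real.Gamma l) *
        (Real.exp (-(x'' + y) / t) * Tser (co l) (x'' * y / t ^ 2)))
      (((2 * t) ^ (-l) * Real.Gamma l) *
        (Real.exp (-(x' + y) / t) *
          (-(1 / t) * Tser (co l) (x' * y / t ^ 2)
            + y / t ^ 2 * Tser (dcoef (co l)) (x' * y / t ^ 2)))) x' := by
    intro x'
    have H := ((hexp x').mul (hS (co l) hc0 x')).const_mul ((2 * t) ^ (-l) * Real.Gamma l)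
    refine H.congr_deriv ?_
    ring
  have hderiv1 : deriv (fun x' => heatKer l t x' y)
      = fun x' => ((2 * t) ^ (-l) * Real.Gamma l) *
          (Real.exp (-(x' + y) / t) *
            (-(1 / t) * Tser (co l) (x' * y / t ^ 2)
              + y / t ^ 2 * Tser (dcoef (co l)) (x' * y / t ^ 2))) := by
    rw [funeq]
    funext x'
    exact (hD1 x').deriv
  -- second derivative in x
  have hD2 : HasDerivAt
      (fun x' => ((2 * t) ^ (-l) * Real.Gamma l) *
        (Real.exp (-(x' + y) / t) *
          (-(1 / t) * Tser (co l) (x' * y / t ^ 2)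
            + y / t ^ 2 * Tser (dcoef (co l)) (x' * y / t ^ 2))))
      (((2 * t) ^ (-l) * Real.Gamma l) *
        (Real.exp (-(x + y) / t) *
          (1 / t ^ 2 * Tser (co l) (x * y / t ^ 2)
            - 2 * y / t ^ 3 * Tser (dcoef (co l)) (x * y / t ^ 2)
            + y ^ 2 / t ^ 4 * Tser (dcoef (dcoef (co l))) (x * y / t ^ 2)))) x := by
    have hg : HasDerivAt
        (fun x' : ℝ => -(1 / t) * Tser (co l) (x' * y / t ^ 2)
          + y / t ^ 2 * Tser (dcoef (co l)) (x' * y / t ^ 2))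
        (-(1 / t) * (Tser (dcoef (co l)) (x * y / t ^ 2) * (y / t ^ 2))
          + y / t ^ 2 * (Tser (dcoef (dcoef (co l))) (x * y / t ^ 2) * (y / t ^ 2))) x :=
      ((hS (co l) hc0 x).const_mul (-(1 / t))).add ((hS (dcoef (co l)) hc1 x).const_mul (y / t ^ 2))
    have H := ((hexp x).mul hg).const_mul ((2 * t) ^ (-l) * Real.Gamma l)
    refine H.congr_deriv ?_
    field_simp
    ring
  -- derivative in t
  have funeqt : (fun t' => heatKer l t' x y)
      = fun t' => Real.Gamma l * ((2 * t') ^ (-l) *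
          (Real.exp (-(x + y) / t') * Tser (co l) (x * y / t' ^ 2))) := by
    funext t'
    rw [heatKer, hts]
    ring
  have hp : HasDerivAt (fun t' : ℝ => (2 * t') ^ (-l))
      ((2 * 1) * (-l) * (2 * t) ^ (-l - 1)) t := by
    have hb : HasDerivAt (fun t' : ℝ => 2 * t') (2 * 1) t := (hasDerivAt_id t).const_mul 2
    exact hb.rpow_const (Or.inl (by positivity))
  have hq : HasDerivAt (fun t' : ℝ => Real.exp (-(x + y) / t'))
      (Real.exp (-(x + y) / t) * (-(x + y) * -((t : ℝ) ^ 2)⁻¹)) t := by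
    have hfeq : (fun t' : ℝ => -(x + y) / t') = fun t' : ℝ => -(x + y) * t'⁻¹ :=
      funext fun _ => div_eq_mul_inv _ _
    have h : HasDerivAt (fun t' : ℝ => -(x + y) / t') (-(x + y) * -((t : ℝ) ^ 2)⁻¹) t := by
      rw [hfeq]
      exact (hasDerivAt_inv ht.ne').const_mul (-(x + y))
    exact h.exp
  have hr : HasDerivAt (fun t' : ℝ => Tser (co l) (x * y / t' ^ 2))
      (Tser (dcoef (co l)) (x * y / t ^ 2) * (x * y * -(2 * t / ((t : ℝ) ^ 2) ^ 2))) t := by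
    have hfeq : (fun t' : ℝ => x * y / t' ^ 2) = fun t' : ℝ => x * y * (t' ^ 2)⁻¹ :=
      funext fun _ => div_eq_mul_inv _ _
    have hin : HasDerivAt (fun t' : ℝ => x * y / t' ^ 2)
        (x * y * -(2 * t / ((t : ℝ) ^ 2) ^ 2)) t := by
      rw [hfeq]
      have H := ((hasDerivAt_pow 2 t).inv (by positivity : (t:ℝ) ^ 2 ≠ 0)).const_mul (x * y)
      refine H.congr_deriv ?_
      push_cast
      ring
    exact (hasDerivAt_Tser hc0 _).comp t hin
  have hDt : HasDerivAt (fun t' => Real.Gamma l * ((2 * t') ^ (-l) *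
      (Real.exp (-(x + y) / t') * Tser (co l) (x * y / t' ^ 2))))
      (Real.Gamma l * ((2 * 1) * (-l) * (2 * t) ^ (-l - 1) *
          (Real.exp (-(x + y) / t) * Tser (co l) (x * y / t ^ 2))
        + (2 * t) ^ (-l) *
          (Real.exp (-(x + y) / t) * ((x + y) / t ^ 2) * Tser (co l) (x * y / t ^ 2)
            + Real.exp (-(x + y) / t) *
              (Tser (dcoef (co l)) (x * y / t ^ 2) * (-2 * x * y / t ^ 3))))) t := by
    have H := (hp.mul (hq.mul hr)).const_mul (Real.Gamma l)
    refine H.congr_deriv ?_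
    simp only [Pi.mul_apply]
    field_simp
  -- put everything together
  rw [hderiv1, funeqt]
  rw [hD2.deriv, hDt.deriv]
  beta_reduce
  have hA : (2 * t) ^ (-l - 1) = (2 * t) ^ (-l) * (2 * t)⁻¹ := by
    rw [show -l - 1 = -l + (-1) by ring, Real.rpow_add (by positivity), Real.rpow_neg_one]
  rw [hA, ← ode hl (x * y / t ^ 2)]
  have hgt : (0:ℝ) < 2 * t := by positivity
  field_simp
  ring
end

section
/- For λ > 0 there exists a constant C > 0 such that the one-dimensional heat kernel satisfies the bound h_λ(t,x,y) ≤ C t^{-λ} (1 + xy/t²)^{1/4} e^{-(x+y-2√(xy))/t} = C t^{-λ} (1 + xy/t²)^{1/4} e^{-(√x-√y)²/t} for all t > 0 and x, y > 0. -/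
open Set

section Stmt10Aux
open Real

lemma gamma_nat_half (m : ℕ) :
    Real.Gamma (m + 1/2) = (2*m).factorial * Real.sqrt π / (4^m * m.factorial) := by
  induction m with
  | zero => norm_num [Real.Gamma_one_half_eq]
  | succ n ih =>
    have hne : ((n:ℝ) + 1/2) ≠ 0 := by positivity
    have h1 : ((n+1 : ℕ) : ℝ) + 1/2 = ((n:ℝ) + 1/2) + 1 := by push_cast; ring
    have h2 : 2*(n+1) = (2*n+1)+1 := by ring
    rw [h1, Real.Gamma_add_one hne, ih, h2, Nat.factorial_succ, Nat.factorial_succ,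
      Nat.factorial_succ]
    have hn : ((n.factorial : ℝ)) ≠ 0 := by exact_mod_cast n.factorial_ne_zero
    push_cast
    field_simp
    ring

lemma exp_tsum (z : ℝ) : Real.exp z = ∑' n : ℕ, z^n / n.factorial := by
  rw [Real.exp_eq_exp_ℝ, NormedSpace.exp_eq_tsum_div]

lemma summable_even (z : ℝ) (hz : 0 ≤ z) :
    Summable (fun m : ℕ => z^(2*m) / ((2*m).factorial : ℝ)) := by
  apply Summable.of_nonneg_of_le (fun m => by positivity)
    (fun m => ?_) (Real.summable_pow_div_factorial (z^2))
  rw [pow_mul]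
  apply div_le_div_of_nonneg_left (by positivity) (by positivity)
  exact_mod_cast Nat.factorial_le (by omega)

lemma succ_le_two_factorial (m : ℕ) : m + 1 ≤ 2 * m.factorial := by
  cases m with
  | zero => simp
  | succ n =>
    rw [Nat.factorial_succ]
    have h1 : 1 ≤ n.factorial := n.factorial_pos
    calc n + 1 + 1 ≤ 2 * (n+1) * 1 := by omega
    _ ≤ 2 * (n+1) * n.factorial := by exact Nat.mul_le_mul_left _ h1
    _ = 2 * ((n+1) * n.factorial) := by ring

lemma summable_meven (z : ℝ) (hz : 0 ≤ z) :
    Summable (fun m : ℕ => ((m:ℝ)+1) * z^(2*m) / ((2*m).factorial : ℝ)) := by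
  apply Summable.of_nonneg_of_le (fun m => by positivity)
    (fun m => ?_) ((Real.summable_pow_div_factorial (z^2)).mul_left 2)
  have h1 : (m.factorial * m.factorial : ℕ) ≤ (2*m).factorial := by
    have := Nat.factorial_mul_factorial_dvd_factorial_add m m
    exact Nat.le_of_dvd (Nat.factorial_pos _) (by rwa [← two_mul] at this)
  have h2 : ((m:ℝ)+1) ≤ 2 * m.factorial := by exact_mod_cast succ_le_two_factorial m
  have hf : (0:ℝ) < m.factorial := by exact_mod_cast m.factorial_pos
  calc ((m:ℝ)+1) * z^(2*m) / ((2*m).factorial : ℝ)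
      ≤ (2 * m.factorial) * z^(2*m) / ((m.factorial : ℝ) * m.factorial) := by
        apply div_le_div₀ (by positivity) (by apply mul_le_mul_of_nonneg_right h2 (by positivity))
          (by positivity) (by exact_mod_cast h1)
    _ = 2 * ((z^2)^m / m.factorial) := by rw [pow_mul]; field_simp

lemma even_sum_le (z : ℝ) (hz : 0 ≤ z) :
    ∑' m : ℕ, z^(2*m) / ((2*m).factorial : ℝ) ≤ Real.exp z := by
  rw [exp_tsum]
  exact Summable.tsum_le_tsum_of_inj (fun m => 2*m) (fun a b h => by simpa using h)
    (fun c _ => by positivity) (fun m => le_refl _) (summable_even z hz)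
    (Real.summable_pow_div_factorial z)

lemma odd_sum_le (z : ℝ) (hz : 0 ≤ z) :
    ∑' m : ℕ, z^(2*m+1) / ((2*m+1).factorial : ℝ) ≤ Real.exp z := by
  rw [exp_tsum]
  apply Summable.tsum_le_tsum_of_inj (fun m => 2*m+1) (fun a b h => by simpa using h)
    (fun c _ => by positivity) (fun m => le_refl _) ?_ (Real.summable_pow_div_factorial z)
  apply Summable.of_nonneg_of_le (fun m => by positivity)
    (fun m => ?_) ((Real.summable_pow_div_factorial (z^2)).mul_left (z+1))
  have hb : z^(2*m+1) ≤ (z+1) * (z^2)^m := by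
    rw [← pow_mul, pow_succ, mul_comm]
    apply mul_le_mul_of_nonneg_right (by linarith) (by positivity)
  calc z^(2*m+1) / ((2*m+1).factorial : ℝ)
      ≤ ((z+1) * (z^2)^m) / (m.factorial : ℝ) := by
        apply div_le_div₀ (by positivity) hb (by positivity)
        exact_mod_cast Nat.factorial_le (by omega)
    _ = (z+1) * ((z^2)^m / m.factorial) := by ring

lemma summable_mzeven (z : ℝ) (hz : 0 ≤ z) :
    Summable (fun m : ℕ => (m:ℝ) * z^(2*m) / ((2*m).factorial : ℝ)) := by
  apply Summable.of_nonneg_of_le (fun m => by positivity) (fun m => ?_) (summable_meven z hz)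
  apply div_le_div_of_nonneg_right ?_ (by positivity)
  have : (0:ℝ) ≤ z^(2*m) := by positivity
  nlinarith

lemma meven_sum_le (z : ℝ) (hz : 0 ≤ z) :
    ∑' m : ℕ, (m:ℝ) * z^(2*m) / ((2*m).factorial : ℝ) ≤ (z/2) * Real.exp z := by
  have hsum := summable_mzeven z hz
  have hodd : Summable (fun k : ℕ => (z/2) * (z^(2*k+1) / ((2*k+1).factorial : ℝ))) := by
    apply Summable.mul_left
    apply Summable.of_nonneg_of_le (fun m => by positivity) (fun m => ?_)
      ((Real.summable_pow_div_factorial (z^2)).mul_left (z+1))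
    have hb : z^(2*m+1) ≤ (z+1) * (z^2)^m := by
      rw [← pow_mul, pow_succ, mul_comm]
      apply mul_le_mul_of_nonneg_right (by linarith) (by positivity)
    calc z^(2*m+1) / ((2*m+1).factorial : ℝ)
        ≤ ((z+1) * (z^2)^m) / (m.factorial : ℝ) := by
          apply div_le_div₀ (by positivity) hb (by positivity)
          exact_mod_cast Nat.factorial_le (by omega)
      _ = (z+1) * ((z^2)^m / m.factorial) := by ring
  rw [Summable.tsum_eq_zero_add hsum]
  have hterm : ∀ k : ℕ, ((k+1 : ℕ):ℝ) * z^(2*(k+1)) / ((2*(k+1)).factorial : ℝ)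
      = (z/2) * (z^(2*k+1) / ((2*k+1).factorial : ℝ)) := by
    intro k
    have h2 : 2*(k+1) = (2*k+1)+1 := by ring
    rw [h2, Nat.factorial_succ, pow_succ]
    have hf : ((2*k+1).factorial : ℝ) ≠ 0 := by exact_mod_cast (2*k+1).factorial_ne_zero
    push_cast
    field_simp
    ring
  rw [tsum_congr hterm, tsum_mul_left]
  simp only [Nat.cast_zero, zero_mul, zero_div, zero_add]
  exact mul_le_mul_of_nonneg_left (odd_sum_le z hz) (by linarith)

lemma gamma_compare (l : ℝ) (hl : 0 < l) (m : ℕ) :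
    Real.Gamma (m + 1/2) ≤
      (Real.sqrt π / Real.Gamma l + Real.sqrt π / Real.Gamma (1+l)) *
        Real.sqrt (m+1) * Real.Gamma (m + l) := by
  have hGl : 0 < Real.Gamma l := Real.Gamma_pos_of_pos hl
  have hG1l : 0 < Real.Gamma (1+l) := Real.Gamma_pos_of_pos (by linarith)
  have hpi : 0 < Real.sqrt π := Real.sqrt_pos.mpr Real.pi_pos
  have claim : ∀ n : ℕ, Real.Gamma ((n:ℝ) + 1 + 1/2) ≤
      (Real.sqrt π / (2 * Real.Gamma (1+l))) * Real.sqrt (2*n + 3/2) *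
        Real.Gamma ((n:ℝ) + 1 + l) := by
    intro n
    induction n with
    | zero =>
      have h0 : ((0:ℕ):ℝ) + 1 + 1/2 = 1/2 + 1 := by norm_num
      rw [h0, Real.Gamma_add_one (by norm_num), Real.Gamma_one_half_eq]
      have h1 : (1:ℝ) ≤ Real.sqrt (2*(0:ℕ) + 3/2) := by
        rw [show (1:ℝ) = Real.sqrt 1 by simp]
        apply Real.sqrt_le_sqrt; push_cast; norm_num
      have h2 : ((0:ℕ):ℝ) + 1 + l = 1 + l := by norm_num
      rw [h2]
      calc 1/2 * Real.sqrt π = (Real.sqrt π / (2 * Real.Gamma (1+l))) * 1 * Real.Gamma (1+l) := by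
            field_simp
        _ ≤ _ := by
            apply mul_le_mul_of_nonneg_right ?_ hG1l.le
            apply mul_le_mul_of_nonneg_left h1 (by positivity)
    | succ n ih =>
      have e1 : ((n+1:ℕ):ℝ) + 1 + 1/2 = ((n:ℝ) + 1 + 1/2) + 1 := by push_cast; ring
      have e2 : ((n+1:ℕ):ℝ) + 1 + l = ((n:ℝ) + 1 + l) + 1 := by push_cast; ring
      rw [e1, e2, Real.Gamma_add_one (by positivity), Real.Gamma_add_one (by positivity)]
      have hG : 0 ≤ Real.Gamma ((n:ℝ) + 1 + l) := (Real.Gamma_pos_of_pos (by positivity)).le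
      have key : ((n:ℝ) + 1 + 1/2) * Real.sqrt (2*(n:ℝ) + 3/2) ≤
          ((n:ℝ) + 1 + l) * Real.sqrt (2*((n+1:ℕ):ℝ) + 3/2) := by
        have f1 : ((n:ℝ) + 1 + 1/2) * Real.sqrt (2*(n:ℝ) + 3/2)
            = Real.sqrt (((n:ℝ) + 3/2)^2 * (2*(n:ℝ) + 3/2)) := by
          rw [Real.sqrt_mul (by positivity), Real.sqrt_sq (by positivity)]; ring_nf
        have f2 : ((n:ℝ) + 1) * Real.sqrt (2*((n+1:ℕ):ℝ) + 3/2)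
            = Real.sqrt (((n:ℝ) + 1)^2 * (2*(n:ℝ) + 7/2)) := by
          rw [Real.sqrt_mul (by positivity), Real.sqrt_sq (by positivity)]; push_cast; ring_nf
        have f3 : Real.sqrt (((n:ℝ) + 3/2)^2 * (2*(n:ℝ) + 3/2)) ≤
            Real.sqrt (((n:ℝ) + 1)^2 * (2*(n:ℝ) + 7/2)) := by
          apply Real.sqrt_le_sqrt
          have : (0:ℝ) ≤ (n:ℝ) := n.cast_nonneg
          nlinarith
        have f4 : ((n:ℝ) + 1) * Real.sqrt (2*((n+1:ℕ):ℝ) + 3/2) ≤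
            ((n:ℝ) + 1 + l) * Real.sqrt (2*((n+1:ℕ):ℝ) + 3/2) := by
          apply mul_le_mul_of_nonneg_right (by linarith) (Real.sqrt_nonneg _)
        calc ((n:ℝ) + 1 + 1/2) * Real.sqrt (2*(n:ℝ) + 3/2)
            = Real.sqrt (((n:ℝ) + 3/2)^2 * (2*(n:ℝ) + 3/2)) := f1
          _ ≤ Real.sqrt (((n:ℝ) + 1)^2 * (2*(n:ℝ) + 7/2)) := f3
          _ = ((n:ℝ) + 1) * Real.sqrt (2*((n+1:ℕ):ℝ) + 3/2) := f2.symm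
          _ ≤ _ := f4
      calc ((n:ℝ) + 1 + 1/2) * Real.Gamma ((n:ℝ) + 1 + 1/2)
          ≤ ((n:ℝ) + 1 + 1/2) * ((Real.sqrt π / (2 * Real.Gamma (1+l))) *
              Real.sqrt (2*n + 3/2) * Real.Gamma ((n:ℝ) + 1 + l)) := by
            apply mul_le_mul_of_nonneg_left ih (by positivity)
        _ = (Real.sqrt π / (2 * Real.Gamma (1+l))) *
              ((((n:ℝ) + 1 + 1/2) * Real.sqrt (2*n + 3/2)) * Real.Gamma ((n:ℝ) + 1 + l)) := by
            ring
        _ ≤ (Real.sqrt π / (2 * Real.Gamma (1+l))) *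
              ((((n:ℝ) + 1 + l) * Real.sqrt (2*((n+1:ℕ):ℝ) + 3/2)) * Real.Gamma ((n:ℝ) + 1 + l)) := by
            apply mul_le_mul_of_nonneg_left ?_ (by positivity)
            exact mul_le_mul_of_nonneg_right key hG
        _ = (Real.sqrt π / (2 * Real.Gamma (1+l))) * Real.sqrt (2*((n+1:ℕ):ℝ) + 3/2) *
              (((n:ℝ) + 1 + l) * Real.Gamma ((n:ℝ) + 1 + l)) := by ring
  cases m with
  | zero =>
    simp only [Nat.cast_zero, zero_add]
    rw [Real.Gamma_one_half_eq]
    have h1 : (1:ℝ) ≤ Real.sqrt (0+1) := by norm_num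
    calc Real.sqrt π = (Real.sqrt π / Real.Gamma l) * Real.Gamma l := by field_simp
      _ ≤ (Real.sqrt π / Real.Gamma l + Real.sqrt π / Real.Gamma (1+l)) * Real.Gamma l := by
          apply mul_le_mul_of_nonneg_right ?_ hGl.le
          have : 0 < Real.sqrt π / Real.Gamma (1+l) := by positivity
          linarith
      _ ≤ _ := by
          rw [Real.sqrt_one, mul_one]
  | succ n =>
    have h := claim n
    have e1 : ((n+1:ℕ):ℝ) + 1/2 = ((n:ℝ) + 1 + 1/2) := by push_cast; ring
    have e2 : ((n+1:ℕ):ℝ) + l = ((n:ℝ) + 1 + l) := by push_cast; ring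
    rw [e1, e2]
    have hG : 0 ≤ Real.Gamma ((n:ℝ) + 1 + l) := (Real.Gamma_pos_of_pos (by positivity)).le
    have hs : Real.sqrt (2*(n:ℝ) + 3/2) ≤ Real.sqrt 2 * Real.sqrt (((n+1:ℕ):ℝ)+1) := by
      rw [← Real.sqrt_mul (by norm_num)]
      apply Real.sqrt_le_sqrt
      push_cast; linarith
    have hs2 : Real.sqrt π / (2 * Real.Gamma (1+l)) * Real.sqrt 2 ≤
        Real.sqrt π / Real.Gamma l + Real.sqrt π / Real.Gamma (1+l) := by
      have h2 : Real.sqrt 2 ≤ 2 := by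
        nlinarith [Real.sq_sqrt (by norm_num : (0:ℝ) ≤ 2), Real.sqrt_nonneg 2]
      have : Real.sqrt π / (2 * Real.Gamma (1+l)) * Real.sqrt 2 ≤
          Real.sqrt π / (2 * Real.Gamma (1+l)) * 2 := by
        apply mul_le_mul_of_nonneg_left h2 (by positivity)
      have he : Real.sqrt π / (2 * Real.Gamma (1+l)) * 2 = Real.sqrt π / Real.Gamma (1+l) := by
        field_simp
      have hpos : 0 < Real.sqrt π / Real.Gamma l := by positivity
      linarith
    calc Real.Gamma ((n:ℝ) + 1 + 1/2)
        ≤ (Real.sqrt π / (2 * Real.Gamma (1+l))) * Real.sqrt (2*n + 3/2) *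
            Real.Gamma ((n:ℝ) + 1 + l) := h
      _ ≤ (Real.sqrt π / (2 * Real.Gamma (1+l))) * (Real.sqrt 2 * Real.sqrt (((n+1:ℕ):ℝ)+1)) *
            Real.Gamma ((n:ℝ) + 1 + l) := by
          apply mul_le_mul_of_nonneg_right ?_ hG
          exact mul_le_mul_of_nonneg_left hs (by positivity)
      _ = (Real.sqrt π / (2 * Real.Gamma (1+l)) * Real.sqrt 2) * Real.sqrt (((n+1:ℕ):ℝ)+1) *
            Real.Gamma ((n:ℝ) + 1 + l) := by ring
      _ ≤ _ := by
          apply mul_le_mul_of_nonneg_right ?_ hG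
          exact mul_le_mul_of_nonneg_right hs2 (Real.sqrt_nonneg _)

lemma core (l : ℝ) (hl : 0 < l) (q : ℝ) (hq : 0 ≤ q) :
    ∑' m : ℕ, q^m / ((m.factorial : ℝ) * Real.Gamma ((m:ℝ) + l)) ≤
      ((Real.sqrt π / Real.Gamma l + Real.sqrt π / Real.Gamma (1+l)) * Real.sqrt 2 / Real.sqrt π)
        * (1+q) ^ ((1:ℝ)/4) * Real.exp (2 * Real.sqrt q) := by
  set K1 := Real.sqrt π / Real.Gamma l + Real.sqrt π / Real.Gamma (1+l) with hK1
  have hGl : 0 < Real.Gamma l := Real.Gamma_pos_of_pos hl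
  have hG1l : 0 < Real.Gamma (1+l) := Real.Gamma_pos_of_pos (by linarith)
  have hpi : 0 < Real.sqrt π := Real.sqrt_pos.mpr Real.pi_pos
  have hK1p : 0 < K1 := by rw [hK1]; positivity
  set z := 2 * Real.sqrt q with hzdef
  have hz : 0 ≤ z := by positivity
  have hz2 : z^2 = 4*q := by
    rw [hzdef, mul_pow, Real.sq_sqrt hq]; norm_num
  set a := Real.sqrt (1 + Real.sqrt q) with hadef
  have ha1 : 1 ≤ a := by
    have h := Real.sqrt_le_sqrt (show (1:ℝ) ≤ 1 + Real.sqrt q by nlinarith [Real.sqrt_nonneg q])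
    rwa [Real.sqrt_one] at h
  have ha0 : 0 < a := by linarith
  have hza : a^2 = 1 + z/2 := by
    rw [hadef, Real.sq_sqrt (by nlinarith [Real.sqrt_nonneg q]), hzdef]; ring
  clear_value z a
  set c1 := K1 / (Real.sqrt π * (2*a)) with hc1
  set c2 := K1 * (1/(2*a) + a/2) / Real.sqrt π with hc2
  have hc1p : 0 < c1 := by rw [hc1]; positivity
  have hc2p : 0 < c2 := by rw [hc2]; positivity
  have step1 : ∀ m : ℕ, q^m / ((m.factorial : ℝ) * Real.Gamma ((m:ℝ) + l)) ≤
      c1 * ((m:ℝ) * z^(2*m) / ((2*m).factorial : ℝ))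
        + c2 * (z^(2*m) / ((2*m).factorial : ℝ)) := by
    intro m
    have hG : 0 < Real.Gamma ((m:ℝ) + l) := Real.Gamma_pos_of_pos (by positivity)
    have hfac : (0:ℝ) < m.factorial := by exact_mod_cast m.factorial_pos
    have hfac2 : (0:ℝ) < (2*m).factorial := by exact_mod_cast (2*m).factorial_pos
    have hcmp := gamma_compare l hl m
    rw [gamma_nat_half m] at hcmp
    have key : ((2*m).factorial : ℝ) * Real.sqrt π ≤
        K1 * Real.sqrt ((m:ℝ)+1) * Real.Gamma ((m:ℝ) + l) * (4^m * m.factorial) := by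
      rw [hK1]
      rwa [div_le_iff₀ (by positivity)] at hcmp
    have inv_bound : 1/((m.factorial:ℝ) * Real.Gamma ((m:ℝ)+l)) ≤
        K1 * Real.sqrt ((m:ℝ)+1) * 4^m / (((2*m).factorial:ℝ) * Real.sqrt π) := by
      rw [div_le_div_iff₀ (by positivity) (by positivity), one_mul]
      refine key.trans (le_of_eq (by ring))
    have hzq : z^(2*m) = 4^m * q^m := by
      rw [pow_mul, hz2, mul_pow]
    have amgm : Real.sqrt ((m:ℝ)+1) ≤ ((m:ℝ)+1)/(2*a) + a/2 := by
      have h1 : 2*a*Real.sqrt ((m:ℝ)+1) ≤ ((m:ℝ)+1) + a^2 := by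
        nlinarith [sq_nonneg (Real.sqrt ((m:ℝ)+1) - a),
          Real.sq_sqrt (show (0:ℝ) ≤ (m:ℝ)+1 by positivity)]
      rw [div_add_div _ _ (by positivity : (2*a:ℝ) ≠ 0) (by norm_num : (2:ℝ) ≠ 0),
        le_div_iff₀ (by positivity)]
      nlinarith
    calc q^m / ((m.factorial : ℝ) * Real.Gamma ((m:ℝ) + l))
        = q^m * (1/((m.factorial:ℝ) * Real.Gamma ((m:ℝ)+l))) := by ring
      _ ≤ q^m * (K1 * Real.sqrt ((m:ℝ)+1) * 4^m / (((2*m).factorial:ℝ) * Real.sqrt π)) := by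
          apply mul_le_mul_of_nonneg_left inv_bound (by positivity)
      _ = (K1/Real.sqrt π) * (Real.sqrt ((m:ℝ)+1) * (z^(2*m) / ((2*m).factorial : ℝ))) := by
          rw [hzq]; ring
      _ ≤ (K1/Real.sqrt π) * ((((m:ℝ)+1)/(2*a) + a/2) * (z^(2*m) / ((2*m).factorial : ℝ))) := by
          apply mul_le_mul_of_nonneg_left ?_ (by positivity)
          apply mul_le_mul_of_nonneg_right amgm (by positivity)
      _ = c1 * ((m:ℝ) * z^(2*m) / ((2*m).factorial : ℝ))
            + c2 * (z^(2*m) / ((2*m).factorial : ℝ)) := by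
          rw [hc1, hc2]; ring
  have S1 : Summable (fun m : ℕ => c1 * ((m:ℝ) * z^(2*m) / ((2*m).factorial : ℝ))) :=
    (summable_mzeven z hz).mul_left c1
  have S2 : Summable (fun m : ℕ => c2 * (z^(2*m) / ((2*m).factorial : ℝ))) :=
    (summable_even z hz).mul_left c2
  have Sh := S1.add S2
  have Sf : Summable (fun m : ℕ => q^m / ((m.factorial : ℝ) * Real.Gamma ((m:ℝ) + l))) := by
    apply Summable.of_nonneg_of_le (fun m => ?_) step1 Sh
    have hG : 0 < Real.Gamma ((m:ℝ) + l) := Real.Gamma_pos_of_pos (by positivity)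
    positivity
  have main : ∑' m : ℕ, q^m / ((m.factorial : ℝ) * Real.Gamma ((m:ℝ) + l)) ≤
      (K1/Real.sqrt π) * a * Real.exp z := by
    calc ∑' m : ℕ, q^m / ((m.factorial : ℝ) * Real.Gamma ((m:ℝ) + l))
        ≤ ∑' m : ℕ, (c1 * ((m:ℝ) * z^(2*m) / ((2*m).factorial : ℝ))
            + c2 * (z^(2*m) / ((2*m).factorial : ℝ))) := Sf.tsum_le_tsum step1 Sh
      _ = c1 * ∑' m : ℕ, (m:ℝ) * z^(2*m) / ((2*m).factorial : ℝ)
            + c2 * ∑' m : ℕ, z^(2*m) / ((2*m).factorial : ℝ) := by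
          rw [Summable.tsum_add S1 S2, tsum_mul_left, tsum_mul_left]
      _ ≤ c1 * ((z/2) * Real.exp z) + c2 * Real.exp z := by
          apply add_le_add
          · exact mul_le_mul_of_nonneg_left (meven_sum_le z hz) hc1p.le
          · exact mul_le_mul_of_nonneg_left (even_sum_le z hz) hc2p.le
      _ = (K1/Real.sqrt π) * a * Real.exp z := by
          rw [hc1, hc2, show z/2 = a^2 - 1 by linarith [hza]]
          field_simp
          ring
  refine main.trans ?_
  have h14 : (1+q) ^ ((1:ℝ)/4) = Real.sqrt (Real.sqrt (1+q)) := by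
    rw [Real.sqrt_eq_rpow, Real.sqrt_eq_rpow,
      ← Real.rpow_mul (by positivity : (0:ℝ) ≤ 1+q)]
    norm_num
  have hs1 : Real.sqrt q ≤ Real.sqrt (1+q) := Real.sqrt_le_sqrt (by linarith)
  have hs2 : 1 ≤ Real.sqrt (1+q) := by
    have h := Real.sqrt_le_sqrt (show (1:ℝ) ≤ 1 + q by linarith)
    rwa [Real.sqrt_one] at h
  have haq : a ≤ Real.sqrt 2 * (1+q) ^ ((1:ℝ)/4) := by
    rw [h14, hadef, ← Real.sqrt_mul (by norm_num : (0:ℝ) ≤ 2)]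
    exact Real.sqrt_le_sqrt (by linarith)
  calc (K1/Real.sqrt π) * a * Real.exp z
      ≤ (K1/Real.sqrt π) * (Real.sqrt 2 * (1+q) ^ ((1:ℝ)/4)) * Real.exp z := by
        apply mul_le_mul_of_nonneg_right ?_ (Real.exp_nonneg z)
        apply mul_le_mul_of_nonneg_left haq (by positivity)
    _ = K1 * Real.sqrt 2 / Real.sqrt π * (1+q) ^ ((1:ℝ)/4) * Real.exp z := by ring


/-- For `λ > 0` there is `C > 0` with
`h_λ(t,x,y) ≤ C t^{-λ} (1 + xy/t²)^{1/4} e^{-(√x-√y)²/t}` for all `t, x, y > 0`. -/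
theorem stmt10 (l : ℝ) (hl : 0 < l) :
    ∃ C : ℝ, 0 < C ∧ ∀ t x y : ℝ, 0 < t → 0 < x → 0 < y →
      heatKer l t x y ≤
        C * t ^ (-l) * (1 + x * y / t ^ 2) ^ ((1 : ℝ) / 4) *
          Real.exp (-(Real.sqrt x - Real.sqrt y) ^ 2 / t) := by
  have hGl : 0 < Real.Gamma l := Real.Gamma_pos_of_pos hl
  have hG1l : 0 < Real.Gamma (1+l) := Real.Gamma_pos_of_pos (by linarith)
  have hpi : 0 < Real.sqrt π := Real.sqrt_pos.mpr Real.pi_pos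
  set K := (Real.sqrt π / Real.Gamma l + Real.sqrt π / Real.Gamma (1+l))
      * Real.sqrt 2 / Real.sqrt π with hK
  have hKp : 0 < K := by rw [hK]; positivity
  refine ⟨(2:ℝ)^(-l) * Real.Gamma l * K, ?_, ?_⟩
  · have h2 : (0:ℝ) < (2:ℝ)^(-l) := Real.rpow_pos_of_pos (by norm_num) _
    positivity
  intro t x y ht hx hy
  set q := x * y / t^2 with hq
  have hq0 : 0 ≤ q := by rw [hq]; positivity
  have hsq : Real.sqrt q = Real.sqrt x * Real.sqrt y / t := by
    have he : q = (Real.sqrt x * Real.sqrt y / t)^2 := by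
      rw [hq, div_pow, mul_pow, Real.sq_sqrt hx.le, Real.sq_sqrt hy.le]
    rw [he, Real.sqrt_sq (by positivity)]
  have hexp : -(x+y)/t + 2 * Real.sqrt q = -(Real.sqrt x - Real.sqrt y)^2/t := by
    rw [hsq]
    have ex := Real.sq_sqrt hx.le
    have ey := Real.sq_sqrt hy.le
    field_simp
    nlinarith [ex, ey]
  have hA : (0:ℝ) ≤ (2 * t) ^ (-l) * Real.exp (-(x + y) / t) * Real.Gamma l := by
    have : (0:ℝ) ≤ (2*t) ^ (-l) := Real.rpow_nonneg (by linarith) _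
    positivity
  have hS := core l hl q hq0
  calc heatKer l t x y
      = (2 * t) ^ (-l) * Real.exp (-(x + y) / t) * Real.Gamma l *
          ∑' m : ℕ, q ^ m / ((m.factorial : ℝ) * Real.Gamma ((m : ℝ) + l)) := by
        rw [heatKer, hq]
    _ ≤ (2 * t) ^ (-l) * Real.exp (-(x + y) / t) * Real.Gamma l *
          (K * (1+q) ^ ((1:ℝ)/4) * Real.exp (2 * Real.sqrt q)) := by
        apply mul_le_mul_of_nonneg_left (hS.trans (le_of_eq (by rw [hK]))) hA
    _ = (2:ℝ)^(-l) * t^(-l) * Real.Gamma l * K * ((1+q) ^ ((1:ℝ)/4)) *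
          (Real.exp (-(x + y) / t) * Real.exp (2 * Real.sqrt q)) := by
        rw [Real.mul_rpow (by norm_num) ht.le]; ring
    _ = (2:ℝ)^(-l) * Real.Gamma l * K * t^(-l) * ((1+q) ^ ((1:ℝ)/4)) *
          Real.exp (-(Real.sqrt x - Real.sqrt y)^2/t) := by
        rw [← Real.exp_add, hexp]; ring
    _ = (2:ℝ)^(-l) * Real.Gamma l * K * t ^ (-l) * (1 + x * y / t ^ 2) ^ ((1 : ℝ) / 4) *
          Real.exp (-(Real.sqrt x - Real.sqrt y) ^ 2 / t) := by rw [← hq]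

end Stmt10Aux
end
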